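/- Fix N ∈ ℕ, Π > 0, and a real constant I. Define γ_φ(u,ε) = ((N+2)/72)(1 - ε/4 + Iε) Π² u² - ((N+2)(N+8)/432)(I+1) Π³ u³ and u*(ε) = (6ε/((N+8)Π))(1 + ε(3(3N+14)/(N+8)² + 1/2)). Then γ_φ(u*(ε), ε) = ((N+2)ε²/(2(N+8)²))·(1 + ε(6(3N+14)/(N+8)² - 1/4)) + O(ε⁴) as ε → 0. In particular, the result is independent of Π and of I through order ε³. -/
import Mathlib
set_option maxHeartbeats 2000000


/-- η = γ_φ(u*) equals its Lorentz-invariant ε-expansion up to O(ε⁴). -/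
theorem stmt8 (N : ℕ) (Pi I : ℝ) (hPi : 0 < Pi) :
    ∃ C δ : ℝ, 0 < C ∧ 0 < δ ∧ ∀ ε : ℝ, 0 < ε → ε < δ →
      |(fun u e : ℝ =>
            ((N + 2 : ℝ) / 72) * (1 - e / 4 + I * e) * Pi ^ 2 * u ^ 2 -
              ((N + 2 : ℝ) * (N + 8 : ℝ) / 432) * (I + 1) * Pi ^ 3 * u ^ 3)
          (6 * ε / ((N + 8 : ℝ) * Pi) *
            (1 + ε * (3 * (3 * N + 14 : ℝ) / (N + 8 : ℝ) ^ 2 + 1 / 2))) ε -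
        ((N + 2 : ℝ) * ε ^ 2 / (2 * (N + 8 : ℝ) ^ 2)) *
          (1 + ε * (6 * (3 * N + 14 : ℝ) / (N + 8 : ℝ) ^ 2 - 1 / 4))| ≤ C * ε ^ 4 := by
  set n : ℝ := (N : ℝ) with hn
  have hn8 : (0:ℝ) < n + 8 := by positivity
  have hn8' : (n + 8 : ℝ) ≠ 0 := ne_of_gt hn8
  have hPi' : Pi ≠ 0 := ne_of_gt hPi
  set s : ℝ := 3 * (3 * n + 14) / (n + 8) ^ 2 + 1 / 2 with hs
  set K : ℝ := (n + 2) / (2 * (n + 8) ^ 2) with hK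
  set a : ℝ := K * (s ^ 2 - I * s - 7 / 2 * s) with ha
  set b : ℝ := K * (-2 * I - 13 / 4) * s ^ 2 with hb
  set c : ℝ := -K * (I + 1) * s ^ 3 with hc
  refine ⟨|a| + |b| + |c| + 1, 1, by positivity, one_pos, ?_⟩
  intro ε hε hε1
  have key :
      ((n + 2 : ℝ) / 72) * (1 - ε / 4 + I * ε) * Pi ^ 2 *
          (6 * ε / ((n + 8) * Pi) * (1 + ε * s)) ^ 2 -
        ((n + 2) * (n + 8) / 432) * (I + 1) * Pi ^ 3 *
          (6 * ε / ((n + 8) * Pi) * (1 + ε * s)) ^ 3 -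
        ((n + 2) * ε ^ 2 / (2 * (n + 8) ^ 2)) * (1 + ε * (2 * s - 5 / 4)) =
      ε ^ 4 * (a + b * ε + c * ε ^ 2) := by
    rw [ha, hb, hc, hK]
    field_simp
    ring
  have hts : 6 * (3 * n + 14) / (n + 8) ^ 2 - 1 / 4 = 2 * s - 5 / 4 := by
    rw [hs]; field_simp; ring
  beta_reduce
  rw [hts, key]
  have hb1 : |a + b * ε + c * ε ^ 2| ≤ |a| + |b| + |c| := by
    calc |a + b * ε + c * ε ^ 2| ≤ |a| + |b * ε| + |c * ε ^ 2| := by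
          exact (abs_add_le _ _).trans (by gcongr; exact abs_add_le _ _)
      _ ≤ |a| + |b| + |c| := by
          have he : |ε| ≤ 1 := by rw [abs_of_pos hε]; linarith
          have h1 : |b * ε| ≤ |b| := by
            rw [abs_mul]
            nlinarith [abs_nonneg b, abs_nonneg ε]
          have h2 : |c * ε ^ 2| ≤ |c| := by
            rw [abs_mul, abs_pow]
            have hp : |ε| ^ 2 ≤ 1 := pow_le_one₀ (abs_nonneg _) he
            nlinarith [abs_nonneg c]
          linarith
  rw [abs_mul, abs_pow, abs_of_pos hε]
  nlinarith [pow_pos hε 4, abs_nonneg (a + b * ε + c * ε ^ 2)]
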